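/- Let S be a commutative semiring and let 𝔞, 𝔟 be ideals of S. Then ᶻ√(𝔞·𝔟) = ᶻ√(𝔞 ∩ 𝔟) = ᶻ√𝔞 ∩ ᶻ√𝔟. -/
import Mathlib


/-- An ideal `I` of a commutative semiring is a *z-ideal* if for every `x ∈ I`,
the intersection of all maximal ideals containing `x` is contained in `I`. -/
def IsZIdeal {S : Type*} [CommSemiring S] (I : Ideal S) : Prop :=
  ∀ x ∈ I, sInf {m : Ideal S | m.IsMaximal ∧ x ∈ m} ≤ I

/-- The *z-radical* of an ideal: the intersection of all prime z-ideals containing it. -/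
def zRadical {S : Type*} [CommSemiring S] (a : Ideal S) : Ideal S :=
  sInf {p : Ideal S | p.IsPrime ∧ IsZIdeal p ∧ a ≤ p}

theorem zRadical_mul_inf {S : Type*} [CommSemiring S] (a b : Ideal S) :
    zRadical (a * b) = zRadical (a ⊓ b) ∧ zRadical (a ⊓ b) = zRadical a ⊓ zRadical b := by
  constructor
  · unfold zRadical
    congr 1
    ext p
    simp only [Set.mem_setOf_eq]
    constructor
    · rintro ⟨hp, hz, hle⟩
      refine ⟨hp, hz, ?_⟩
      rcases hp.mul_le.mp hle with h | h
      · exact le_trans inf_le_left h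
      · exact le_trans inf_le_right h
    · rintro ⟨hp, hz, hle⟩
      exact ⟨hp, hz, le_trans Ideal.mul_le_inf hle⟩
  · unfold zRadical
    have : {p : Ideal S | p.IsPrime ∧ IsZIdeal p ∧ a ⊓ b ≤ p}
        = {p : Ideal S | p.IsPrime ∧ IsZIdeal p ∧ a ≤ p}
          ∪ {p : Ideal S | p.IsPrime ∧ IsZIdeal p ∧ b ≤ p} := by
      ext p
      simp only [Set.mem_setOf_eq, Set.mem_union]
      constructor
      · rintro ⟨hp, hz, hle⟩
        rcases hp.mul_le.mp (le_trans Ideal.mul_le_inf hle) with h | h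
        · exact Or.inl ⟨hp, hz, h⟩
        · exact Or.inr ⟨hp, hz, h⟩
      · rintro (⟨hp, hz, h⟩ | ⟨hp, hz, h⟩)
        · exact ⟨hp, hz, le_trans inf_le_left h⟩
        · exact ⟨hp, hz, le_trans inf_le_right h⟩
    rw [this, sInf_union]
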